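/- Let Q be a conjunctive-query-like structure over a binary signature, represented as a finite simple graph H = (V, E) (the Gaifman graph of Q) together with a set F ⊆ V of free variables. Suppose H is a forest and for every connected component C of H, the subgraph of C induced by F ∩ V(C) is connected or empty. Then the hypergraph with vertex set V and hyperedge set {{x,y} : {x,y} ∈ E} ∪ {F} is α-acyclic, i.e., admits a join tree: a tree whose nodes are exactly these hyperedges such that for each v ∈ V, the set of nodes containing v induces a connected subtree. -/

import Mathlib

/-- The hyperedge set of the hypergraph associated with a graph `H` and a set
`F` of free variables: all edges `{x, y}` of `H`, together with `F` itself. -/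
def JEdges {V : Type*} (H : SimpleGraph V) (F : Set V) : Set (Set V) :=
  {e | ∃ x y, H.Adj x y ∧ e = {x, y}} ∪ {F}

/-- A set of hyperedges admits a join tree: a tree whose nodes are exactly the
hyperedges, such that for every vertex `v` the hyperedges containing `v`
induce a connected subtree. -/
def HasJoinTree {V : Type*} (H : Set (Set V)) : Prop :=
  ∃ T : SimpleGraph ↥H, T.IsTree ∧
    ∀ v : V, ({e : ↥H | v ∈ (e : Set V)}).Nonempty →
      (SimpleGraph.induce {e : ↥H | v ∈ (e : Set V)} T).Connected

open SimpleGraph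

def PClosed {V : Type*} (H : SimpleGraph V) (F : Set V) : Prop :=
  ∀ a ∈ F, ∀ b ∈ F, H.Reachable a b → ∃ w : H.Walk a b, ∀ v ∈ w.support, v ∈ F

lemma pair_eq {α : Type*} {a b c d : α} (hcd : c ≠ d) (h : ({a, b} : Set α) = {c, d}) :
    (a = c ∧ b = d) ∨ (a = d ∧ b = c) := by
  have ha : a = c ∨ a = d := by
    have : a ∈ ({c, d} : Set α) := h ▸ (by simp : a ∈ ({a, b} : Set α))
    simpa using this
  have hb : b = c ∨ b = d := by
    have : b ∈ ({c, d} : Set α) := h ▸ (by simp : b ∈ ({a, b} : Set α))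
    simpa using this
  have hd : d = a ∨ d = b := by
    have : d ∈ ({a, b} : Set α) := h ▸ (by simp : d ∈ ({c, d} : Set α))
    simpa using this
  have hc : c = a ∨ c = b := by
    have : c ∈ ({a, b} : Set α) := h ▸ (by simp : c ∈ ({c, d} : Set α))
    simpa using this
  rcases ha with rfl | rfl
  · rcases hb with rfl | rfl
    · rcases hd with rfl | rfl
      · exact absurd rfl hcd
      · exact absurd rfl hcd
    · exact Or.inl ⟨rfl, rfl⟩
  · rcases hb with rfl | rfl
    · exact Or.inr ⟨rfl, rfl⟩
    · rcases hc with rfl | rfl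
      · exact absurd rfl hcd
      · exact absurd rfl hcd

lemma path_avoids {V : Type*} {H : SimpleGraph V} {x y a b : V} (hleaf : ∀ z, H.Adj x z → z = y)
    {p : H.Walk a b} (hp : p.IsPath) (ha : a ≠ x) (hb : b ≠ x) : x ∉ p.support := by
  classical
  intro hx
  have hq := p.take_spec hx
  obtain ⟨z₂, h₂, r₂, hr₂⟩ :=
    Walk.exists_eq_cons_of_ne (fun h => hb h.symm) (p.dropUntil x hx)
  have he₂ : s(x, y) ∈ (p.dropUntil x hx).edges := by
    rw [hr₂, Walk.edges_cons, ← hleaf z₂ h₂]; exact List.mem_cons_self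
  obtain ⟨z₁, h₁, r₁, hr₁⟩ :=
    Walk.exists_eq_cons_of_ne (fun h => ha h.symm) (p.takeUntil x hx).reverse
  have he₁ : s(x, y) ∈ (p.takeUntil x hx).edges := by
    have : s(x, y) ∈ (p.takeUntil x hx).reverse.edges := by
      rw [hr₁, Walk.edges_cons, ← hleaf z₁ h₁]; exact List.mem_cons_self
    rwa [Walk.edges_reverse, List.mem_reverse] at this
  have hnd : p.edges.Nodup := hp.isTrail.edges_nodup
  rw [← hq, Walk.edges_append] at hnd
  exact (List.nodup_append'.mp hnd).2.2 he₁ he₂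

lemma pclosed_delete {V : Type*} {H : SimpleGraph V} {x y : V} (hxy : H.Adj x y)
    (hleaf : ∀ z, H.Adj x z → z = y) {F : Set V} (hP : PClosed H F) :
    PClosed (H.deleteEdges {s(x, y)}) F := by
  classical
  set H' := H.deleteEdges {s(x, y)} with hH'
  have hx_iso : ∀ z, ¬H'.Adj x z := by
    intro z hz
    rw [hH', SimpleGraph.deleteEdges_adj] at hz
    obtain rfl := hleaf z hz.1
    exact hz.2 rfl
  have hx_only : ∀ b, H'.Reachable x b → x = b := by
    rintro b ⟨w⟩
    cases w with
    | nil => rfl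
    | cons h q => exact absurd h (hx_iso _)
  intro a ha b hb hr
  by_cases hax : a = x
  · subst hax
    obtain rfl := hx_only b hr
    exact ⟨Walk.nil, by simpa using ha⟩
  by_cases hbx : b = x
  · subst hbx
    exact absurd (hx_only a hr.symm).symm hax
  · have hrH : H.Reachable a b := hr.mono (SimpleGraph.deleteEdges_le _)
    obtain ⟨w, hw⟩ := hP a ha b hb hrH
    have hp : (w.toPath : H.Walk a b).IsPath := w.toPath.isPath
    have hxsup : x ∉ (w.toPath : H.Walk a b).support := path_avoids hleaf hp hax hbx
    have hedges : ∀ e ∈ (w.toPath : H.Walk a b).edges, e ∈ H'.edgeSet := by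
      intro e he
      have heH : e ∈ H.edgeSet := (w.toPath : H.Walk a b).edges_subset_edgeSet he
      rw [hH', SimpleGraph.edgeSet_deleteEdges]
      refine ⟨heH, ?_⟩
      intro hmem
      rw [Set.mem_singleton_iff] at hmem
      subst hmem
      exact hxsup ((w.toPath : H.Walk a b).fst_mem_support_of_mem_edges he)
    refine ⟨(w.toPath : H.Walk a b).transfer H' hedges, ?_⟩
    intro v hv
    rw [Walk.support_transfer] at hv
    exact hw v (Walk.support_toPath_subset w hv)
lemma pclosed_of_hfree {V : Type*} {H : SimpleGraph V} {F : Set V}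
    (hfree : ∀ comp : H.ConnectedComponent,
      ({v | v ∈ F ∧ H.connectedComponentMk v = comp} : Set V) = ∅ ∨
      (SimpleGraph.induce
        ({v | v ∈ F ∧ H.connectedComponentMk v = comp} : Set V) H).Connected) :
    PClosed H F := by
  intro a ha b hb hr
  set S : Set V := {v | v ∈ F ∧ H.connectedComponentMk v = H.connectedComponentMk a} with hS
  have haS : a ∈ S := ⟨ha, rfl⟩
  have hbS : b ∈ S := ⟨hb, ConnectedComponent.sound hr.symm⟩
  rcases hfree (H.connectedComponentMk a) with hemp | hconn
  · rw [← hS] at hemp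
    rw [hemp] at haS
    exact absurd haS (Set.notMem_empty a)
  · rw [← hS] at hconn
    obtain ⟨w0⟩ := hconn.preconnected ⟨a, haS⟩ ⟨b, hbS⟩
    let emb : (SimpleGraph.induce S H) →g H := ⟨Subtype.val, fun {c d} h => h⟩
    refine ⟨w0.map emb, ?_⟩
    intro v hv
    rw [SimpleGraph.Walk.support_map] at hv
    obtain ⟨v', _, rfl⟩ := List.mem_map.mp hv
    exact v'.2.1

lemma jedges_no_edge {V : Type*} {H : SimpleGraph V} (h : ∀ a b, ¬H.Adj a b) (F : Set V) :
    HasJoinTree (JEdges H F) := by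
  have hJ : JEdges H F = {F} := by
    ext e
    simp only [JEdges, Set.mem_union, Set.mem_setOf_eq, Set.mem_singleton_iff]
    constructor
    · rintro (⟨a, b, hab, rfl⟩ | rfl)
      · exact absurd hab (h a b)
      · rfl
    · rintro rfl
      exact Or.inr rfl
  rw [hJ]
  refine ⟨⊥, ⟨?_, isAcyclic_bot⟩, ?_⟩
  · rw [connected_iff_exists_forall_reachable]
    refine ⟨⟨F, rfl⟩, ?_⟩
    intro n
    have : (⟨F, rfl⟩ : ↥({F} : Set (Set V))) = n := Subtype.ext n.2.symm
    exact this ▸ Reachable.refl _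
  · intro v hne
    rw [connected_iff_exists_forall_reachable]
    obtain ⟨n, hn⟩ := hne
    refine ⟨⟨n, hn⟩, ?_⟩
    intro m
    have : (⟨n, hn⟩ : {e : ↥({F} : Set (Set V)) | v ∈ (e : Set V)}) = m :=
      Subtype.ext (Subtype.ext ((n.2 : n.1 = F).trans (m.1.2 : m.1.1 = F).symm))
    exact this ▸ Reachable.refl _

lemma exists_good_leaf {V : Type*} [Fintype V] {H : SimpleGraph V} (hac : H.IsAcyclic)
    {a₀ b₀ : V} (h₀ : H.Adj a₀ b₀) {F : Set V} (hP : PClosed H F) :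
    ∃ x y, H.Adj x y ∧ (∀ z, H.Adj x z → z = y) ∧ (x ∉ F ∨ y ∈ F) := by
  classical
  set L : Set ℕ := {n | ∃ (u v : V) (p : H.Walk u v), p.IsPath ∧ p.length = n} with hL
  have h1L : 1 ∈ L := ⟨a₀, b₀, Walk.cons h₀ Walk.nil, by
    simp [Walk.isPath_def, h₀.ne], rfl⟩
  have hbdd : BddAbove L := by
    refine ⟨Fintype.card V, ?_⟩
    rintro n ⟨u, v, p, hp, rfl⟩
    exact hp.length_lt.le
  obtain ⟨u, v, p, hp, hlen⟩ := Nat.sSup_mem ⟨1, h1L⟩ hbdd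
  have hone : 1 ≤ sSup L := le_csSup hbdd h1L
  have hmax : ∀ (u' v' : V) (q : H.Walk u' v'), q.IsPath → q.length ≤ sSup L :=
    fun u' v' q hq => le_csSup hbdd ⟨u', v', q, hq, rfl⟩
  have key : ∀ (u' v' : V) (q : H.Walk u' v'), q.IsPath → q.length = sSup L →
      ∃ z, H.Adj u' z ∧ ∀ w, H.Adj u' w → w = z := by
    intro u' v' q hq hql
    have huv' : u' ≠ v' := by
      rintro rfl
      rw [Walk.isPath_iff_eq_nil] at hq
      rw [hq] at hql
      simp at hql
      omega
    obtain ⟨z, hz, q', rfl⟩ := Walk.exists_eq_cons_of_ne huv' q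
    refine ⟨z, hz, ?_⟩
    intro w hw
    by_contra hwz
    have hwu : w ≠ u' := fun h => H.irrefl (h ▸ hw)
    by_cases hws : w ∈ (Walk.cons hz q').support
    · have hr : ((Walk.cons hz q').takeUntil w hws).IsPath := hq.takeUntil hws
      have hedge : s(w, u') ∉ ((Walk.cons hz q').takeUntil w hws).edges := by
        intro hmem
        have hmem' : s(w, u') ∈ (Walk.cons hz q').edges :=
          Walk.edges_takeUntil_subset _ hws hmem
        rw [Walk.edges_cons, List.mem_cons] at hmem'
        rcases hmem' with h | h
        · rw [Sym2.eq_iff] at h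
          rcases h with ⟨h1, _⟩ | ⟨h1, _⟩
          · exact hwu h1
          · exact hwz h1
        · exact ((Walk.cons_isPath_iff hz q').mp hq).2
            (Walk.snd_mem_support_of_mem_edges q' h)
      have hcyc := Path.cons_isCycle ⟨_, hr⟩ hw.symm hedge
      exact hac _ hcyc
    · have hext : (Walk.cons hw.symm (Walk.cons hz q')).IsPath := hq.cons hws
      have := hmax _ _ _ hext
      rw [Walk.length_cons] at this
      omega
  obtain ⟨z, hz, hzleaf⟩ := key u v p hp hlen
  by_cases hxF : u ∈ F
  · by_cases hzF : z ∈ F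
    · exact ⟨u, z, hz, hzleaf, Or.inr hzF⟩
    · have hrev : p.reverse.IsPath := hp.reverse
      have hrevlen : p.reverse.length = sSup L := by rw [Walk.length_reverse]; exact hlen
      obtain ⟨z', hz', hzleaf'⟩ := key v u p.reverse hrev hrevlen
      by_cases hvF : v ∈ F
      · by_cases hz'F : z' ∈ F
        · exact ⟨v, z', hz', hzleaf', Or.inr hz'F⟩
        · exfalso
          obtain ⟨w, hw⟩ := hP u hxF v hvF ⟨p⟩
          have huv : u ≠ v := by
            rintro rfl
            rw [Walk.isPath_iff_eq_nil] at hp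
            rw [hp] at hlen
            simp at hlen
            omega
          obtain ⟨c, hc, w', rfl⟩ := Walk.exists_eq_cons_of_ne huv w
          have hcz : c = z := hzleaf c hc
          refine hzF (hw z ?_)
          rw [Walk.support_cons]
          exact List.mem_cons_of_mem _ (hcz ▸ w'.start_mem_support)
      · exact ⟨v, z', hz', hzleaf', Or.inl hvF⟩
  · exact ⟨u, z, hz, hzleaf, Or.inl hxF⟩
lemma pendant {W : Type*} {S : Set W} {e : W} (he : e ∉ S) (t : ↥S)
    {T' : SimpleGraph ↥S} (htree : T'.IsTree) :
    ∃ T : SimpleGraph ↥(insert e S), T.IsTree ∧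
      (∀ a b : ↥S,
        T.Adj ⟨a.1, Set.mem_insert_of_mem _ a.2⟩ ⟨b.1, Set.mem_insert_of_mem _ b.2⟩ ↔
          T'.Adj a b) ∧
      (∀ n : ↥(insert e S),
        T.Adj ⟨e, Set.mem_insert _ _⟩ n ↔ n = ⟨t.1, Set.mem_insert_of_mem _ t.2⟩) := by
  classical
  set ι : ↥S → ↥(insert e S) := fun m => ⟨m.1, Set.mem_insert_of_mem _ m.2⟩ with hι
  set E : ↥(insert e S) := ⟨e, Set.mem_insert _ _⟩ with hE
  have ιinj : Function.Injective ι := fun a b h =>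
    Subtype.ext (show (ι a).1 = (ι b).1 from congrArg Subtype.val h)
  have ιne : ∀ m : ↥S, ι m ≠ E := by
    intro m h
    apply he
    have hme : m.1 = e := congrArg Subtype.val h
    rw [← hme]
    exact m.2
  have hclass : ∀ n : ↥(insert e S), n = E ∨ ∃ m : ↥S, n = ι m := by
    rintro ⟨n, hn⟩
    rcases Set.mem_insert_iff.mp hn with h | h
    · exact Or.inl (Subtype.ext h)
    · exact Or.inr ⟨⟨n, h⟩, rfl⟩
  let T : SimpleGraph ↥(insert e S) :=
    { Adj := fun a b =>
        (∃ a' b' : ↥S, T'.Adj a' b' ∧ a = ι a' ∧ b = ι b') ∨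
          (a = E ∧ b = ι t) ∨ (a = ι t ∧ b = E)
      symm := by
        refine ⟨?_⟩; rintro a b (⟨a', b', h, rfl, rfl⟩ | ⟨rfl, rfl⟩ | ⟨rfl, rfl⟩)
        · exact Or.inl ⟨b', a', h.symm, rfl, rfl⟩
        · exact Or.inr (Or.inr ⟨rfl, rfl⟩)
        · exact Or.inr (Or.inl ⟨rfl, rfl⟩)
      loopless := by
        refine ⟨?_⟩; rintro a (⟨a', b', h, rfl, h2⟩ | ⟨rfl, h2⟩ | ⟨h2, rfl⟩)
        · exact h.ne (ιinj h2)
        · exact ιne t h2.symm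
        · exact ιne t h2.symm }
  have hTadj : ∀ a b, T.Adj a b ↔
      ((∃ a' b' : ↥S, T'.Adj a' b' ∧ a = ι a' ∧ b = ι b') ∨
        (a = E ∧ b = ι t) ∨ (a = ι t ∧ b = E)) := fun a b => Iff.rfl
  have hadj₁ : ∀ a b : ↥S, T.Adj (ι a) (ι b) ↔ T'.Adj a b := by
    intro a b
    rw [hTadj]
    constructor
    · rintro (⟨a', b', h, ha, hb⟩ | ⟨ha, _⟩ | ⟨_, hb⟩)
      · rwa [ιinj ha, ιinj hb]
      · exact absurd ha (ιne a)
      · exact absurd hb (ιne b)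
    · intro h
      exact Or.inl ⟨a, b, h, rfl, rfl⟩
  have hadj₂ : ∀ n, T.Adj E n ↔ n = ι t := by
    intro n
    rw [hTadj]
    constructor
    · rintro (⟨a', b', h, ha, hb⟩ | ⟨_, rfl⟩ | ⟨ha, _⟩)
      · exact absurd ha.symm (ιne a')
      · rfl
      · exact absurd ha.symm (ιne t)
    · rintro rfl
      exact Or.inr (Or.inl ⟨rfl, rfl⟩)
  let f : T' →g T := ⟨ι, fun {a b} h => Or.inl ⟨a, b, h, rfl, rfl⟩⟩
  have hpre : ∀ n, T.Reachable (ι t) n := by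
    intro n
    rcases hclass n with rfl | ⟨m, rfl⟩
    · exact ((hadj₂ (ι t)).mpr rfl).reachable.symm
    · exact SimpleGraph.Reachable.map f (htree.isConnected.preconnected t m)
  have hconn : T.Connected := (connected_iff_exists_forall_reachable _).mpr ⟨ι t, hpre⟩
  have deg1 : ∀ (z : ↥(insert e S)), (∀ w w', T.Adj z w → T.Adj z w' → w = w') →
      ∀ (c : T.Walk z z), ¬c.IsCycle := by
    intro z hz c hc
    cases c with
    | nil => exact hc.ne_nil rfl
    | cons h1 q =>
      rename_i w₁
      obtain ⟨u2, h2, q2, hq2⟩ := Walk.exists_eq_cons_of_ne h1.ne q.reverse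
      have hu2 : u2 = w₁ := hz u2 w₁ h2 h1
      subst hu2
      have hmem : s(z, u2) ∈ q.edges := by
        have : s(z, u2) ∈ q.reverse.edges := by
          rw [hq2, Walk.edges_cons]
          exact List.mem_cons_self
        rwa [Walk.edges_reverse, List.mem_reverse] at this
      have hnd := hc.isCircuit.isTrail.edges_nodup
      rw [Walk.edges_cons] at hnd
      exact (List.nodup_cons.mp hnd).1 hmem
  have proj : ∀ {n m : ↥(insert e S)} (w : T.Walk n m), E ∉ w.support →
      ∀ (a b : ↥S), n = ι a → m = ι b →
      ∃ w' : T'.Walk a b, w'.support.map ι = w.support ∧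
        w'.edges.map (Sym2.map ι) = w.edges := by
    intro n m w
    induction w with
    | nil =>
      intro _ a b ha hb
      obtain rfl : a = b := ιinj (ha.symm.trans hb)
      refine ⟨Walk.nil, ?_, ?_⟩
      · simp [ha]
      · simp
    | cons h p ih =>
      rename_i n' c m'
      intro hs a b ha hb
      have hc : c ≠ E := by
        rintro rfl
        exact hs (by rw [Walk.support_cons]; exact List.mem_cons_of_mem _ p.start_mem_support)
      rcases hclass c with rfl | ⟨mc, rfl⟩
      · exact absurd rfl hc
      · have h' : T'.Adj a mc := (hadj₁ a mc).mp (ha ▸ h)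
        have hs' : E ∉ p.support := fun hh =>
          hs (by rw [Walk.support_cons]; exact List.mem_cons_of_mem _ hh)
        obtain ⟨w', hsup, hedg⟩ := ih hs' mc b rfl hb
        refine ⟨Walk.cons h' w', ?_, ?_⟩
        · rw [Walk.support_cons, Walk.support_cons, List.map_cons, hsup, ha]
        · rw [Walk.edges_cons, Walk.edges_cons, List.map_cons, hedg, Sym2.map_pair_eq, ha]
  have hacyc : T.IsAcyclic := by
    intro v c hc
    by_cases hme : E ∈ c.support
    · exact deg1 E (fun w w' hw hw' => ((hadj₂ w).mp hw).trans ((hadj₂ w').mp hw').symm)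
        (c.rotate E hme) (hc.rotate hme)
    · rcases hclass v with rfl | ⟨a, rfl⟩
      · exact hme c.start_mem_support
      · obtain ⟨c', hsup, hedg⟩ := proj c hme a a rfl rfl
        have h3 := hc.three_le_length
        have hcyc : c'.IsCycle := by
          rw [Walk.isCycle_def]
          refine ⟨⟨?_⟩, ?_, ?_⟩
          · have hnd : (c'.edges.map (Sym2.map ι)).Nodup := by
              rw [hedg]
              exact hc.isCircuit.isTrail.edges_nodup
            exact hnd.of_map
          · rintro rfl
            have : c.edges = [] := by rw [← hedg]; rfl
            have hlen := c.length_edges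
            rw [this] at hlen
            simp at hlen
            omega
          · have hnd : c.support.tail.Nodup := hc.support_nodup
            rw [← hsup, c'.support_eq_cons, List.map_cons, List.tail_cons] at hnd
            exact hnd.of_map
        exact htree.IsAcyclic c' hcyc
  exact ⟨T, ⟨hconn, hacyc⟩, hadj₁, hadj₂⟩
lemma extend_step {V : Type*} {H : SimpleGraph V} {F : Set V} {x y : V}
    (hxy : H.Adj x y) (hleaf : ∀ z, H.Adj x z → z = y) (hcond : x ∈ F → y ∈ F)
    (hFe : F ≠ ({x, y} : Set V))
    (hJT : HasJoinTree (JEdges (H.deleteEdges {s(x, y)}) F)) :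
    HasJoinTree (JEdges H F) := by
  classical
  set H' := H.deleteEdges {s(x, y)} with hH'
  set S' := JEdges H' F with hS'
  have hxney : x ≠ y := hxy.ne
  have hx_iso : ∀ z, ¬H'.Adj x z := by
    intro z hz
    rw [hH', SimpleGraph.deleteEdges_adj] at hz
    obtain rfl := hleaf z hz.1
    exact hz.2 rfl
  have hFS' : F ∈ S' := Or.inr rfl
  have he₀S' : ({x, y} : Set V) ∉ S' := by
    rintro (⟨a, b, hab, hEq⟩ | hF)
    · rcases pair_eq hab.ne hEq with ⟨h1, h2⟩ | ⟨h1, h2⟩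
      · refine hx_iso b ?_
        rw [← h1] at hab
        exact hab
      · refine hx_iso a ?_
        rw [← h1] at hab
        exact hab.symm
    · exact hFe ((Set.mem_singleton_iff.mp hF).symm)
  have hEdel : ∀ a b : V, H.Adj a b ↔ (H'.Adj a b ∨ s(a, b) = s(x, y)) := by
    intro a b
    rw [hH', SimpleGraph.deleteEdges_adj]
    constructor
    · intro h
      by_cases hs : s(a, b) = s(x, y)
      · exact Or.inr hs
      · exact Or.inl ⟨h, by simpa using hs⟩
    · rintro (⟨h, _⟩ | hs)
      · exact h
      · rcases Sym2.eq_iff.mp hs with ⟨rfl, rfl⟩ | ⟨rfl, rfl⟩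
        · exact hxy
        · exact hxy.symm
  have hset : JEdges H F = insert ({x, y} : Set V) S' := by
    ext g
    simp only [JEdges, hS', Set.mem_union, Set.mem_setOf_eq, Set.mem_singleton_iff,
      Set.mem_insert_iff]
    constructor
    · rintro (⟨a, b, hab, rfl⟩ | rfl)
      · rcases (hEdel a b).mp hab with h | hs
        · exact Or.inr (Or.inl ⟨a, b, h, rfl⟩)
        · left
          rcases Sym2.eq_iff.mp hs with ⟨rfl, rfl⟩ | ⟨rfl, rfl⟩
          · rfl
          · exact Set.pair_comm _ _
      · exact Or.inr (Or.inr rfl)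
    · rintro (rfl | ⟨a, b, hab, rfl⟩ | rfl)
      · exact Or.inl ⟨x, y, hxy, rfl⟩
      · exact Or.inl ⟨a, b, (hEdel a b).mpr (Or.inl hab), rfl⟩
      · exact Or.inr rfl
  obtain ⟨T', htree', hconn'⟩ := hJT
  have ht : ∃ t : ↥S', (y ∈ F → (t : Set V) = F) ∧
      ((∃ n : ↥S', y ∈ (n : Set V)) → y ∈ (t : Set V)) ∧ (x ∈ F → (t : Set V) = F) := by
    by_cases hyF : y ∈ F
    · exact ⟨⟨F, hFS'⟩, fun _ => rfl, fun _ => hyF, fun _ => rfl⟩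
    · by_cases hex : ∃ n : ↥S', y ∈ (n : Set V)
      · exact ⟨hex.choose, fun h => absurd h hyF, fun _ => hex.choose_spec,
          fun hx => absurd (hcond hx) hyF⟩
      · exact ⟨⟨F, hFS'⟩, fun h => absurd h hyF, fun h => absurd h hex, fun _ => rfl⟩
  obtain ⟨t, htyF, hty, htxF⟩ := ht
  obtain ⟨T, htree, hadj₁, hadj₂⟩ := pendant he₀S' t htree'
  rw [hset]
  refine ⟨T, htree, ?_⟩
  set ι : ↥S' → ↥(insert ({x, y} : Set V) S') :=
    fun m => ⟨m.1, Set.mem_insert_of_mem _ m.2⟩ with hι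
  set E : ↥(insert ({x, y} : Set V) S') := ⟨{x, y}, Set.mem_insert _ _⟩ with hE
  have hclass : ∀ n : ↥(insert ({x, y} : Set V) S'), n = E ∨ ∃ m : ↥S', n = ι m := by
    rintro ⟨n, hn⟩
    rcases Set.mem_insert_iff.mp hn with h | h
    · exact Or.inl (Subtype.ext h)
    · exact Or.inr ⟨⟨n, h⟩, rfl⟩
  have hadj₁' : ∀ a b : ↥S', T.Adj (ι a) (ι b) ↔ T'.Adj a b := hadj₁
  have hadj₂' : ∀ n, T.Adj E n ↔ n = ι t := hadj₂
  have hxm : ∀ m : ↥S', x ∈ (m : Set V) → (m : Set V) = F := by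
    rintro ⟨m, hm⟩ hx
    rcases hm with ⟨a, b, hab, rfl⟩ | hFm
    · exfalso
      rcases hx with rfl | hx
      · exact hx_iso b hab
      · rw [Set.mem_singleton_iff] at hx
        subst hx
        exact hx_iso a hab.symm
    · exact hFm
  intro v hne
  by_cases hvx : v = x
  · have hvE : v ∈ (E : Set V) := Or.inl hvx
    by_cases hvF : v ∈ F
    · have htF : (t : Set V) = F := htxF (hvx ▸ hvF)
      rw [connected_iff_exists_forall_reachable]
      refine ⟨⟨E, hvE⟩, ?_⟩
      rintro ⟨n, hn⟩
      rcases hclass n with rfl | ⟨m, rfl⟩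
      · exact Reachable.refl _
      · have hn' : v ∈ (m : Set V) := hn
        have hmF : (m : Set V) = F := hxm m (hvx ▸ hn')
        have hmt : m = t := Subtype.ext (hmF.trans htF.symm)
        subst hmt
        exact SimpleGraph.Adj.reachable ((hadj₂' (ι m)).mpr rfl)
    · rw [connected_iff_exists_forall_reachable]
      refine ⟨⟨E, hvE⟩, ?_⟩
      rintro ⟨n, hn⟩
      rcases hclass n with rfl | ⟨m, rfl⟩
      · exact Reachable.refl _
      · exfalso
        have hn' : v ∈ (m : Set V) := hn
        have hmF : (m : Set V) = F := hxm m (hvx ▸ hn')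
        rw [hmF] at hn'
        exact hvF hn'
  by_cases hvy : v = y
  · have hvE : v ∈ (E : Set V) := Or.inr (Set.mem_singleton_iff.mpr hvy)
    by_cases hex : ∃ m : ↥S', v ∈ (m : Set V)
    · have hvt : v ∈ (t : Set V) := by
        rw [hvy] at hex ⊢
        exact hty hex
      have hconn'' := hconn' v ⟨hex.choose, hex.choose_spec⟩
      let f : (SimpleGraph.induce {e : ↥S' | v ∈ (e : Set V)} T') →g
          (SimpleGraph.induce {e : ↥(insert ({x, y} : Set V) S') | v ∈ (e : Set V)} T) :=
        ⟨fun n => ⟨ι n.1, n.2⟩, fun {a b} hab => (hadj₁' a.1 b.1).mpr hab⟩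
      rw [connected_iff_exists_forall_reachable]
      refine ⟨⟨ι t, hvt⟩, ?_⟩
      rintro ⟨n, hn⟩
      rcases hclass n with rfl | ⟨m, rfl⟩
      · exact SimpleGraph.Adj.reachable
          (((hadj₂' (ι t)).mpr rfl).symm : T.Adj (ι t) E)
      · have hr := hconn''.preconnected ⟨t, hvt⟩ ⟨m, hn⟩
        exact hr.map f
    · rw [connected_iff_exists_forall_reachable]
      refine ⟨⟨E, hvE⟩, ?_⟩
      rintro ⟨n, hn⟩
      rcases hclass n with rfl | ⟨m, rfl⟩
      · exact Reachable.refl _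
      · exact absurd ⟨m, hn⟩ hex
  · have hvne₀ : v ∉ (E : Set V) := by
      rintro (rfl | h)
      · exact hvx rfl
      · exact hvy (Set.mem_singleton_iff.mp h)
    obtain ⟨n, hn⟩ := hne
    rcases hclass n with rfl | ⟨m, rfl⟩
    · exact absurd hn hvne₀
    · have hm : v ∈ (m : Set V) := hn
      have hconn'' := hconn' v ⟨m, hm⟩
      let f : (SimpleGraph.induce {e : ↥S' | v ∈ (e : Set V)} T') →g
          (SimpleGraph.induce {e : ↥(insert ({x, y} : Set V) S') | v ∈ (e : Set V)} T) :=
        ⟨fun n => ⟨ι n.1, n.2⟩, fun {a b} hab => (hadj₁' a.1 b.1).mpr hab⟩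
      have hsurj : Function.Surjective f := by
        rintro ⟨n', hn'⟩
        rcases hclass n' with rfl | ⟨m', rfl⟩
        · exact absurd hn' hvne₀
        · exact ⟨⟨m', hn'⟩, rfl⟩
      exact SimpleGraph.Connected.map f hsurj hconn''
lemma same_jedges {V : Type*} {H : SimpleGraph V} {x y : V}
    (hxy : H.Adj x y) (hleaf : ∀ z, H.Adj x z → z = y) {F : Set V}
    (hFe : F = ({x, y} : Set V)) :
    JEdges H F = JEdges (H.deleteEdges {s(x, y)}) F := by
  ext g
  simp only [JEdges, Set.mem_union, Set.mem_setOf_eq, Set.mem_singleton_iff]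
  constructor
  · rintro (⟨a, b, hab, rfl⟩ | rfl)
    · by_cases hs : s(a, b) = s(x, y)
      · right
        rw [hFe]
        rcases Sym2.eq_iff.mp hs with ⟨rfl, rfl⟩ | ⟨rfl, rfl⟩
        · rfl
        · exact Set.pair_comm _ _
      · left
        exact ⟨a, b, by rw [SimpleGraph.deleteEdges_adj]; exact ⟨hab, by simpa using hs⟩, rfl⟩
    · exact Or.inr rfl
  · rintro (⟨a, b, hab, rfl⟩ | rfl)
    · rw [SimpleGraph.deleteEdges_adj] at hab
      exact Or.inl ⟨a, b, hab.1, rfl⟩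
    · exact Or.inr rfl

lemma key_induction {V : Type*} [Fintype V] (F : Set V) :
    ∀ (n : ℕ) (H : SimpleGraph V), H.edgeSet.ncard ≤ n → H.IsAcyclic → PClosed H F →
      HasJoinTree (JEdges H F) := by
  intro n
  induction n with
  | zero =>
    intro H hcard hac hP
    have hE : H.edgeSet = ∅ := by
      rw [← Set.ncard_eq_zero H.edgeSet.toFinite]
      omega
    refine jedges_no_edge (fun a b hab => ?_) F
    have : s(a, b) ∈ H.edgeSet := hab
    rw [hE] at this
    exact this
  | succ n ih =>
    intro H hcard hac hP
    by_cases hEx : ∃ a b, H.Adj a b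
    · obtain ⟨a₀, b₀, h₀⟩ := hEx
      obtain ⟨x, y, hxy, hleaf, hcond⟩ := exists_good_leaf hac h₀ hP
      have hss : (H.deleteEdges {s(x, y)}).edgeSet ⊂ H.edgeSet := by
        rw [SimpleGraph.edgeSet_deleteEdges]
        refine ⟨Set.diff_subset, fun hsub => ?_⟩
        have hmem : s(x, y) ∈ H.edgeSet := hxy
        have := hsub hmem
        exact this.2 rfl
      have hcard' : (H.deleteEdges {s(x, y)}).edgeSet.ncard ≤ n := by
        have := Set.ncard_lt_ncard hss H.edgeSet.toFinite
        omega
      have hac' : (H.deleteEdges {s(x, y)}).IsAcyclic := by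
        intro v c hc
        exact hac (c.mapLe (SimpleGraph.deleteEdges_le _))
          ((Walk.mapLe_isCycle _).mpr hc)
      have hP' := pclosed_delete hxy hleaf hP
      have hJT' := ih (H.deleteEdges {s(x, y)}) hcard' hac' hP'
      by_cases hFe : F = ({x, y} : Set V)
      · rw [same_jedges hxy hleaf hFe]
        exact hJT'
      · exact extend_step hxy hleaf
          (fun hx => (or_iff_not_imp_left.mp hcond) (not_not_intro hx)) hFe hJT'
    · push_neg at hEx
      exact jedges_no_edge hEx F

theorem stmt17 {V : Type*} [Fintype V] (H : SimpleGraph V)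
    (hforest : H.IsAcyclic) (F : Set V)
    (hfree : ∀ comp : H.ConnectedComponent,
      ({v | v ∈ F ∧ H.connectedComponentMk v = comp} : Set V) = ∅ ∨
      (SimpleGraph.induce
        ({v | v ∈ F ∧ H.connectedComponentMk v = comp} : Set V) H).Connected) :
    HasJoinTree (JEdges H F) := by
  classical
  exact key_induction F H.edgeSet.ncard H le_rfl hforest (pclosed_of_hfree hfree)
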